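/- arXiv:1911.01657 — 3 statements merged into one kernel-verified Lean document; each statement's English description precedes it below -/
import Mathlib

section
/- Let A = (A₁,…,A_N) : ℝ^N → ℝ^N be continuous and let y = (y₁,…,y_N) ∈ ℝ^N. Then there exists a continuous function φ_y : ℝ^N → ℝ such that the following N partial derivatives of φ_y exist and satisfy: ∂₁φ_y(x) = −A₁(x) for all x ∈ ℝ^N, and for each n = 2,…,N, ∂_nφ_y(y₁,…,y_{n−1}, x_n,…,x_N) = −A_n(y₁,…,y_{n−1}, x_n,…,x_N) for all (x_n,…,x_N) ∈ ℝ^{N−n+1}. In particular, the full gradient of φ_y exists at the point y and ∇φ_y(y) = −A(y). -/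
open MeasureTheory Complex Filter Topology Metric

noncomputable section

abbrev RN (N : ℕ) := EuclideanSpace ℝ (Fin N)

/-- Lemma on the re-phasing function. Let `A : ℝ^N → ℝ^N` be continuous
and `y ∈ ℝ^N`. Then there is a continuous `φ_y : ℝ^N → ℝ` such that `∂₁φ_y = −A₁`
everywhere, and for each `n`, `∂_nφ_y(x) = −A_n(x)` at every point `x` with
`x₁ = y₁, …, x_{n−1} = y_{n−1}`. In particular all partial derivatives of `φ_y`
exist at `y` and `∇φ_y(y) = −A(y)`. -/
theorem exists_rephasing_function (N : ℕ) (A : RN N → RN N) (hA : Continuous A)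
    (y : RN N) :
    ∃ φ : RN N → ℝ, Continuous φ ∧
      (∀ (n : Fin N) (x : RN N), (∀ m : Fin N, m < n → x m = y m) →
        HasLineDerivAt ℝ φ (-(A x n)) x (EuclideanSpace.single n 1)) ∧
      (∀ n : Fin N, HasLineDerivAt ℝ φ (-(A y n)) y (EuclideanSpace.single n 1)) := by
  classical
  set P : Fin N → ℝ → RN N → RN N := fun k t x =>
    (WithLp.equiv 2 _).symm (fun m => if m < k then y m else if m = k then t else x m) with hP
  have hPcont : ∀ k : Fin N, Continuous (fun p : RN N × ℝ => P k p.2 p.1) := by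
    intro k
    apply Continuous.comp (PiLp.continuous_toLp 2 _)
    apply continuous_pi
    intro m
    by_cases h1 : m < k
    · simpa [h1] using continuous_const
    by_cases h2 : m = k
    · simpa [h1, h2] using continuous_snd
    · simp only [h1, h2, if_false, ↓reduceIte]
      exact ((continuous_apply m).comp (PiLp.continuous_ofLp 2 (fun _ : Fin N => ℝ))).comp continuous_fst
  have heval : ∀ k : Fin N, Continuous (fun x : RN N => x k) :=
    fun k => (continuous_apply k).comp (PiLp.continuous_ofLp 2 (fun _ : Fin N => ℝ))
  set φ : RN N → ℝ := fun x => -∑ k : Fin N, ∫ t in y k..x k, A (P k t x) k with hφ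
  have hφcont : Continuous φ := by
    apply Continuous.neg
    apply continuous_finset_sum
    intro k _
    have huc : Continuous (Function.uncurry fun (x : RN N) (t : ℝ) => A (P k t x) k) :=
      ((continuous_apply k).comp (PiLp.continuous_ofLp 2 (fun _ : Fin N => ℝ))).comp
        (hA.comp (hPcont k))
    exact intervalIntegral.continuous_parametric_intervalIntegral_of_continuous huc (heval k)
  have main : ∀ (n : Fin N) (x : RN N), (∀ m : Fin N, m < n → x m = y m) →
      HasLineDerivAt ℝ φ (-(A x n)) x (EuclideanSpace.single n 1) := by
    intro n x hx
    set v : RN N := EuclideanSpace.single n 1 with hv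
    have hcoord : ∀ (s : ℝ) (m : Fin N), (x + s • v) m = if m = n then x n + s else x m := by
      intro s m
      have hrfl : (x + s • v) m = x m + s * v m := rfl
      rw [hrfl, hv, EuclideanSpace.single_apply]
      by_cases h : m = n
      · subst h; simp
      · simp [h]
    set g : ℝ → ℝ := fun t => A (P n t x) n with hg
    have hgcont : Continuous g := by
      have huc : Continuous (fun p : RN N × ℝ => A (P n p.2 p.1) n) :=
        ((continuous_apply n).comp (PiLp.continuous_ofLp 2 (fun _ : Fin N => ℝ))).comp
          (hA.comp (hPcont n))
      exact huc.comp (continuous_const.prodMk continuous_id)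
    set C : ℝ := ∑ k ∈ Finset.univ.erase n, ∫ t in y k..x k, A (P k t x) k with hC
    have hkey : ∀ s : ℝ, φ (x + s • v) =
        -((∫ t in y n..(x n + s), g t) + C) := by
      intro s
      rw [hφ]
      simp only
      rw [← Finset.add_sum_erase _ _ (Finset.mem_univ n)]
      congr 1
      congr 1
      · -- the n-th term
        have hup : (x + s • v) n = x n + s := by rw [hcoord]; simp
        have hPs : ∀ t : ℝ, P n t (x + s • v) = P n t x := by
          intro t
          ext m
          show (if m < n then y m else if m = n then t else (x + s • v) m)
            = (if m < n then y m else if m = n then t else x m)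
          by_cases h1 : m < n
          · simp [h1]
          by_cases h2 : m = n
          · simp [h1, h2]
          · simp [h1, h2, hcoord s m]
        rw [hup]
        exact intervalIntegral.integral_congr fun t _ => by rw [hPs t]
      · -- the other terms
        apply Finset.sum_congr rfl
        intro k hk
        have hkn : k ≠ n := Finset.ne_of_mem_erase hk
        have hup : (x + s • v) k = x k := by rw [hcoord]; simp [hkn]
        rcases lt_or_gt_of_ne hkn with hlt | hgt
        · -- k < n : both integrals vanish since x k = y k
          have hxk : x k = y k := hx k hlt
          rw [hup, hxk]
          simp
        · -- k > n : the integrand does not depend on s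
          have hPs : ∀ t : ℝ, P k t (x + s • v) = P k t x := by
            intro t
            ext m
            show (if m < k then y m else if m = k then t else (x + s • v) m)
              = (if m < k then y m else if m = k then t else x m)
            by_cases h1 : m < k
            · simp [h1]
            by_cases h2 : m = k
            · simp [h1, h2]
            · have hmn : m ≠ n := by
                intro h; rw [h] at h1; exact h1 hgt
              simp [h1, h2, hcoord s m, hmn]
          rw [hup]
          exact intervalIntegral.integral_congr fun t _ => by rw [hPs t]
    have hPx : P n (x n) x = x := by
      ext m
      show (if m < n then y m else if m = n then x n else x m) = x m
      by_cases h1 : m < n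
      · simp [h1, hx m h1]
      by_cases h2 : m = n
      · subst h2; simp [h1]
      · simp [h1, h2]
    have hgx : g (x n) = A x n := by
      show A (P n (x n) x) n = A x n
      rw [hPx]
    -- now compute the derivative
    have h1 : HasDerivAt (fun u : ℝ => ∫ t in y n..u, g t) (g (x n)) (x n) :=
      (hgcont.integral_hasStrictDerivAt (y n) (x n)).hasDerivAt
    have h2 : HasDerivAt (fun s : ℝ => x n + s) 1 0 := by
      simpa using (hasDerivAt_id (0 : ℝ)).const_add (x n)
    have h1' : HasDerivAt (fun u : ℝ => ∫ t in y n..u, g t) (g (x n)) (x n + 0) := by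
      rwa [add_zero]
    have h3 : HasDerivAt (fun s : ℝ => ∫ t in y n..(x n + s), g t) (g (x n)) 0 := by
      have := h1'.comp 0 h2
      rw [mul_one] at this
      exact this
    have h4 : HasDerivAt (fun s : ℝ => -((∫ t in y n..(x n + s), g t) + C))
        (-(g (x n))) 0 := (h3.add_const C).neg
    have h5 : HasDerivAt (fun s : ℝ => φ (x + s • v)) (-(g (x n))) 0 := by
      have hfun : (fun s : ℝ => φ (x + s • v)) =
          fun s : ℝ => -((∫ t in y n..(x n + s), g t) + C) := funext hkey
      rw [hfun]
      exact h4
    rw [hgx] at h5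
    exact h5
  exact ⟨φ, hφcont, main, fun n => main n y (fun m _ => rfl)⟩

end
end

section
/- Let y ∈ ℝ^N and let F = (F₁,…,F_N) : ℝ^N → ℝ^N be a C¹ vector field such that for each n = 1,…,N, F_n(x) = 0 whenever x₁ = y₁, …, x_{n−1} = y_{n−1} (for n = 1 this means F₁ ≡ 0 on ℝ^N). Set B_{mn} = ∂_n F_m − ∂_m F_n and assume each B_{mn} is bounded. Then for all x ∈ ℝ^N, |F(x)| ≤ ‖B‖_∞ |x − y|, where ‖B‖_∞² = Σ_{n=1}^N Σ_{m<n} ‖B_{mn}‖_{L^∞}². (In the paper F is the corrected magnetic potential A_y = A + ∇φ_y built from a C¹ potential A via the re-phasing function φ_y, in which case B = dA is the magnetic field, and the conclusion reads |A_y(x)| ≤ ‖dA‖_∞|x−y|.) -/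
open MeasureTheory Complex Filter Topology Metric

noncomputable section

/-- the component `B_{mn} = ∂_n F_m − ∂_m F_n` of the field `B = dF` -/
def fieldComp {N : ℕ} (F : RN N → RN N) (m n : Fin N) (x : RN N) : ℝ :=
  fderiv ℝ (fun z => F z m) x (EuclideanSpace.single n 1)
    - fderiv ℝ (fun z => F z n) x (EuclideanSpace.single m 1)

section aux
variable {N : ℕ} {y : RN N} {F : RN N → RN N}

lemma comp_diff (hF : ContDiff ℝ 1 F) (n : Fin N) :
    Differentiable ℝ (fun z => F z n) := by
  have h : (fun z => F z n) = (fun v : RN N => EuclideanSpace.proj n v) ∘ F := rfl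
  rw [h]
  exact (EuclideanSpace.proj n).differentiable.comp (hF.differentiable one_ne_zero)

/-- directional derivative of `F_m` in direction `e_n` vanishes on the slice
`{z : z_i = y_i for i < m}` when `m < n`. -/
lemma derivA (hF : ContDiff ℝ 1 F)
    (hvanish : ∀ (n : Fin N) (x : RN N), (∀ m : Fin N, m < n → x m = y m) → F x n = 0)
    (m n : Fin N) (hmn : m < n) (p : RN N) (hp : ∀ i : Fin N, i < m → p i = y i) :
    fderiv ℝ (fun z => F z m) p (EuclideanSpace.single n 1) = 0 := by
  set e : RN N := EuclideanSpace.single n 1 with he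
  have hzero : ∀ s : ℝ, F (p + s • e) m = 0 := by
    intro s
    refine hvanish m _ (fun i hi => ?_)
    have hin : i ≠ n := ne_of_lt (hi.trans hmn)
    have : (p + s • e) i = p i := by
      simp [he, PiLp.add_apply, PiLp.smul_apply, EuclideanSpace.single_apply, hin]
    rw [this, hp i hi]
  have hinner : HasDerivAt (fun s : ℝ => p + s • e) e 0 := by
    simpa using ((hasDerivAt_id (0:ℝ)).smul_const e).const_add p
  have hp0 : p + (0:ℝ) • e = p := by simp
  have hFd : HasFDerivAt (fun z => F z m) (fderiv ℝ (fun z => F z m) p)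
      ((fun s : ℝ => p + s • e) 0) := by
    rw [show (fun s : ℝ => p + s • e) 0 = p from hp0]
    exact ((comp_diff hF m) p).hasFDerivAt
  have h1 : HasDerivAt (fun s : ℝ => F (p + s • e) m)
      (fderiv ℝ (fun z => F z m) p e) 0 := by
    have h := hFd.comp_hasDerivAt 0 hinner; exact h
  have h0 : HasDerivAt (fun s : ℝ => F (p + s • e) m) 0 0 := by
    have : (fun s : ℝ => F (p + s • e) m) = fun _ => (0:ℝ) := funext hzero
    rw [this]; exact hasDerivAt_const 0 0
  exact h1.unique h0

/-- telescoping-step bound. -/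
lemma stepBound (hF : ContDiff ℝ 1 F)
    (hvanish : ∀ (n : Fin N) (x : RN N), (∀ m : Fin N, m < n → x m = y m) → F x n = 0)
    (hbdd : ∀ m n : Fin N, BddAbove (Set.range fun x => |fieldComp F m n x|))
    (m n : Fin N) (hmn : m < n) (x : RN N) :
    |F (WithLp.toLp 2 fun j : Fin N => if (j:ℕ) < (m:ℕ) then y j else x j) n
      - F (WithLp.toLp 2 fun j : Fin N => if (j:ℕ) < (m:ℕ)+1 then y j else x j) n|
      ≤ (⨆ z : RN N, |fieldComp F m n z|) * |x m - y m| := by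
  set e : RN N := EuclideanSpace.single m 1 with he
  set c : RN N := WithLp.toLp 2 (fun j : Fin N =>
    if (j:ℕ) < (m:ℕ) then y j else if j = m then 0 else x j) with hc
  have happ : ∀ (s : ℝ) (j : Fin N), (c + s • e) j =
      if (j:ℕ) < (m:ℕ) then y j else if j = m then s else x j := by
    intro s j
    by_cases hj : j = m
    · subst hj
      simp [hc, he, PiLp.add_apply, PiLp.smul_apply, EuclideanSpace.single_apply]
    · simp [hc, he, PiLp.add_apply, PiLp.smul_apply, EuclideanSpace.single_apply, hj]
  have hslice : ∀ s : ℝ, ∀ i : Fin N, i < m → (c + s • e) i = y i := by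
    intro s i hi
    rw [happ]
    simp [Fin.lt_def.mp hi]
  have hxm : c + (x m) • e = WithLp.toLp 2 (fun j : Fin N => if (j:ℕ) < (m:ℕ) then y j else x j) := by
    ext j
    rw [happ]
    by_cases hj : j = m
    · subst hj; simp
    · simp [hj]
  have hym : c + (y m) • e = WithLp.toLp 2 (fun j : Fin N => if (j:ℕ) < (m:ℕ)+1 then y j else x j) := by
    ext j
    rw [happ]
    by_cases hj : j = m
    · subst hj; simp
    · have : ((j:ℕ) < (m:ℕ)+1) ↔ ((j:ℕ) < (m:ℕ)) := by
        constructor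
        · intro h
          rcases Nat.lt_succ_iff_lt_or_eq.mp h with h' | h'
          · exact h'
          · exact absurd (Fin.ext h') hj
        · exact fun h => h.trans (Nat.lt_succ_self _)
      simp [hj, this]
  set g : ℝ → ℝ := fun s => F (c + s • e) n with hg
  have hderiv : ∀ s : ℝ, HasDerivAt g (fderiv ℝ (fun z => F z n) (c + s • e) e) s := by
    intro s
    have hinner : HasDerivAt (fun t : ℝ => c + t • e) e s := by
      simpa using ((hasDerivAt_id s).smul_const e).const_add c
    exact (((comp_diff hF n) (c + s • e)).hasFDerivAt).comp_hasDerivAt s hinner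
  have hbound : ∀ s : ℝ, ‖fderiv ℝ (fun z => F z n) (c + s • e) e‖
      ≤ ⨆ z : RN N, |fieldComp F m n z| := by
    intro s
    have hA : fderiv ℝ (fun z => F z m) (c + s • e) (EuclideanSpace.single n 1) = 0 :=
      derivA hF hvanish m n hmn _ (hslice s)
    have : fderiv ℝ (fun z => F z n) (c + s • e) e = -(fieldComp F m n (c + s • e)) := by
      rw [fieldComp, hA]; ring
    rw [Real.norm_eq_abs, this, abs_neg]
    exact le_ciSup (hbdd m n) (c + s • e)
  have := Convex.norm_image_sub_le_of_norm_hasDerivWithin_le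
    (f := g) (f' := fun s => fderiv ℝ (fun z => F z n) (c + s • e) e)
    (s := Set.univ) (fun s _ => (hderiv s).hasDerivWithinAt)
    (fun s _ => hbound s) convex_univ (Set.mem_univ (y m)) (Set.mem_univ (x m))
  rw [Real.norm_eq_abs, Real.norm_eq_abs] at this
  calc |F (WithLp.toLp 2 fun j : Fin N => if (j:ℕ) < (m:ℕ) then y j else x j) n
      - F (WithLp.toLp 2 fun j : Fin N => if (j:ℕ) < (m:ℕ)+1 then y j else x j) n|
      = |g (x m) - g (y m)| := by simp only [hg, hxm, hym]
    _ ≤ _ := this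

lemma filter_sum_eq (n : Fin N) (G : Fin N → ℝ) :
    ∑ m ∈ Finset.univ.filter (· < n), G m
      = ∑ i ∈ Finset.range (n:ℕ), (if h : i < N then G ⟨i, h⟩ else 0) := by
  refine Finset.sum_bij' (i := fun (m : Fin N) _ => (m:ℕ))
    (j := fun i hi => (⟨i, (Finset.mem_range.mp hi).trans n.2⟩ : Fin N))
    (fun m hm => ?_) (fun i hi => ?_) (fun m hm => rfl) (fun i hi => rfl)
    (fun m hm => ?_)
  · simp only [Finset.mem_filter, Finset.mem_univ, true_and] at hm
    exact Finset.mem_range.mpr (Fin.lt_def.mp hm)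
  · simp only [Finset.mem_filter, Finset.mem_univ, true_and]
    exact Fin.lt_def.mpr (Finset.mem_range.mp hi)
  · simp [m.2]

/-- the per-component telescoping bound. -/
lemma compBound (hF : ContDiff ℝ 1 F)
    (hvanish : ∀ (n : Fin N) (x : RN N), (∀ m : Fin N, m < n → x m = y m) → F x n = 0)
    (hbdd : ∀ m n : Fin N, BddAbove (Set.range fun x => |fieldComp F m n x|))
    (n : Fin N) (x : RN N) :
    |F x n| ≤ ∑ m ∈ Finset.univ.filter (· < n),
      (⨆ z : RN N, |fieldComp F m n z|) * |x m - y m| := by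
  set q : ℕ → RN N := fun k => WithLp.toLp 2 fun j : Fin N => if (j:ℕ) < k then y j else x j with hq
  have hq0 : q 0 = x := by ext j; simp [hq]
  have hqn : F (q (n:ℕ)) n = 0 := by
    refine hvanish n _ (fun m hm => ?_)
    simp [hq, Fin.lt_def.mp hm, hm]
  have htel : ∑ i ∈ Finset.range (n:ℕ), (F (q i) n - F (q (i+1)) n)
      = F (q 0) n - F (q (n:ℕ)) n := Finset.sum_range_sub' (fun i => F (q i) n) (n:ℕ)
  have hFx : F x n = ∑ i ∈ Finset.range (n:ℕ), (F (q i) n - F (q (i+1)) n) := by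
    rw [htel, hq0, hqn, sub_zero]
  rw [filter_sum_eq n (fun m => (⨆ z : RN N, |fieldComp F m n z|) * |x m - y m|), hFx]
  refine le_trans (Finset.abs_sum_le_sum_abs _ _) (Finset.sum_le_sum fun i hi => ?_)
  have hiN : i < N := (Finset.mem_range.mp hi).trans n.2
  rw [dif_pos hiN]
  have hmn : (⟨i, hiN⟩ : Fin N) < n := Fin.lt_def.mpr (Finset.mem_range.mp hi)
  exact stepBound hF hvanish hbdd ⟨i, hiN⟩ n hmn x

end aux

/-- linear bound on the corrected potential. Let `y ∈ ℝ^N` and let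
`F : ℝ^N → ℝ^N` be a `C¹` vector field such that `F_n(x) = 0` whenever
`x₁ = y₁, …, x_{n−1} = y_{n−1}` (for `n = 1`, `F₁ ≡ 0`). Set `B_{mn} = ∂_nF_m − ∂_mF_n`
and assume each `B_{mn}` is bounded. Then `|F(x)| ≤ ‖B‖_∞ |x − y|` for all `x`, where
`‖B‖_∞² = Σ_n Σ_{m<n} ‖B_{mn}‖_∞²`. -/
theorem corrected_potential_linear_bound (N : ℕ) (y : RN N) (F : RN N → RN N)
    (hF : ContDiff ℝ 1 F)
    (hvanish : ∀ (n : Fin N) (x : RN N), (∀ m : Fin N, m < n → x m = y m) → F x n = 0)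
    (hbdd : ∀ m n : Fin N, BddAbove (Set.range fun x => |fieldComp F m n x|)) :
    ∀ x : RN N,
      ‖F x‖ ≤ Real.sqrt
          (∑ n : Fin N, ∑ m ∈ Finset.univ.filter (· < n),
            (⨆ x : RN N, |fieldComp F m n x|) ^ 2) * ‖x - y‖ := by
  intro x
  set C : Fin N → Fin N → ℝ := fun m n => ⨆ z : RN N, |fieldComp F m n z| with hC
  have hCnn : ∀ m n : Fin N, 0 ≤ C m n := fun m n =>
    le_trans (abs_nonneg _) (le_ciSup (hbdd m n) x)
  -- sum of squared coordinate differences is bounded by `‖x - y‖ ^ 2`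
  have hxy : ∀ n : Fin N,
      ∑ m ∈ Finset.univ.filter (· < n), |x m - y m| ^ 2 ≤ ‖x - y‖ ^ 2 := by
    intro n
    have h1 : ‖x - y‖ ^ 2 = ∑ m : Fin N, |x m - y m| ^ 2 := by
      rw [EuclideanSpace.norm_eq, Real.sq_sqrt (Finset.sum_nonneg fun i _ => sq_nonneg _)]
      refine Finset.sum_congr rfl fun m _ => ?_
      rw [Real.norm_eq_abs, PiLp.sub_apply]
    rw [h1]
    exact Finset.sum_le_sum_of_subset_of_nonneg (Finset.filter_subset _ _)
      (fun m _ _ => sq_nonneg _)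
  -- per-component squared bound
  have hcomp : ∀ n : Fin N, (F x n) ^ 2
      ≤ (∑ m ∈ Finset.univ.filter (· < n), (C m n) ^ 2) * ‖x - y‖ ^ 2 := by
    intro n
    have h1 : |F x n| ≤ ∑ m ∈ Finset.univ.filter (· < n), C m n * |x m - y m| :=
      compBound hF hvanish hbdd n x
    have h2 : (F x n) ^ 2 ≤ (∑ m ∈ Finset.univ.filter (· < n), C m n * |x m - y m|) ^ 2 := by
      rw [← _root_.sq_abs]
      exact pow_le_pow_left₀ (abs_nonneg _) h1 2
    have h3 := Finset.sum_mul_sq_le_sq_mul_sq (Finset.univ.filter (· < n))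
      (fun m => C m n) (fun m => |x m - y m|)
    refine h2.trans (h3.trans ?_)
    exact mul_le_mul_of_nonneg_left (hxy n)
      (Finset.sum_nonneg fun m _ => sq_nonneg _)
  have hsum : ∑ n : Fin N, (F x n) ^ 2
      ≤ (∑ n : Fin N, ∑ m ∈ Finset.univ.filter (· < n), (C m n) ^ 2) * ‖x - y‖ ^ 2 := by
    rw [Finset.sum_mul]
    exact Finset.sum_le_sum fun n _ => hcomp n
  have hnorm : ‖F x‖ = Real.sqrt (∑ n : Fin N, (F x n) ^ 2) := by
    rw [EuclideanSpace.norm_eq]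
    congr 1
    exact Finset.sum_congr rfl fun n _ => by rw [Real.norm_eq_abs, _root_.sq_abs]
  rw [hnorm]
  calc Real.sqrt (∑ n : Fin N, (F x n) ^ 2)
      ≤ Real.sqrt ((∑ n : Fin N, ∑ m ∈ Finset.univ.filter (· < n), (C m n) ^ 2)
          * ‖x - y‖ ^ 2) := Real.sqrt_le_sqrt hsum
    _ = Real.sqrt (∑ n : Fin N, ∑ m ∈ Finset.univ.filter (· < n), (C m n) ^ 2) * ‖x - y‖ := by
        rw [Real.sqrt_mul (Finset.sum_nonneg fun n _ =>
          Finset.sum_nonneg fun m _ => sq_nonneg _), Real.sqrt_sq (norm_nonneg _)]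

end
end

section
/- Let A : ℝ^N → ℝ^N be continuous and suppose that for each y ∈ ℤ^N there is a C¹ function φ_y : ℝ^N → ℝ with A(·−y) = A + ∇φ_y, normalized by φ_y(y/2) = 0 (so φ₀ ≡ 0). For y ∈ ℤ^N and θ ∈ ℝ let g_{y,θ}u = e^{iθ}e^{iφ_y(·)}u(·−y), and write g_y = g_{y,0}. Then: (i) for all y₁, y₂ ∈ ℤ^N there is a constant γ(y₁,y₂) ∈ ℝ such that φ_{y₁+y₂} = φ_{y₁}(·−y₂) + φ_{y₂} + γ(y₁,y₂), and consequently g_{y₂}g_{y₁} = e^{−iγ(y₁,y₂)} g_{y₁+y₂}; (ii) γ(y,0) = γ(0,y) = γ(y,−y) = 0 for every y ∈ ℤ^N; (iii) g_{y,θ}^{−1} = g_{−y,−θ} for every y ∈ ℤ^N, θ ∈ ℝ; hence the set 𝒢_A = {g_{y,θ} : y ∈ ℤ^N, θ ∈ ℝ} is a group under composition. -/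
open MeasureTheory Complex Filter Topology Metric

noncomputable section

def pdR {N : ℕ} (f : RN N → ℝ) (j : Fin N) (x : RN N) : ℝ :=
  fderiv ℝ f x (EuclideanSpace.single j 1)

/-- embedding of `ℤ^N` into `ℝ^N` -/
def intVec {N : ℕ} (y : Fin N → ℤ) : RN N := WithLp.toLp 2 (fun i => (y i : ℝ))

/-- the magnetic shift with extra phase, `g_{y,θ} u = e^{iθ} e^{iφ_y(·)} u(·−y)` -/
def gShiftθ {N : ℕ} (φ : (Fin N → ℤ) → RN N → ℝ) (y : Fin N → ℤ) (θ : ℝ)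
    (u : RN N → ℂ) : RN N → ℂ :=
  fun x => Complex.exp (Complex.I * (θ : ℂ)) * Complex.exp (Complex.I * (φ y x : ℂ))
    * u (x - intVec y)

lemma intVec_add {N : ℕ} (a b : Fin N → ℤ) : intVec (a + b) = intVec a + intVec b := by
  ext i; simp [intVec]

lemma intVec_zero {N : ℕ} : (intVec (0 : Fin N → ℤ)) = 0 := by
  ext i; simp [intVec]

lemma intVec_neg {N : ℕ} (a : Fin N → ℤ) : intVec (-a) = -intVec a := by
  ext i; simp [intVec]

lemma exp4 (p q r s : ℂ) (w : ℂ) :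
    Complex.exp p * Complex.exp q * (Complex.exp r * Complex.exp s * w)
      = Complex.exp (p + q + r + s) * w := by
  rw [Complex.exp_add, Complex.exp_add, Complex.exp_add]; ring

lemma exp3 (p q r : ℂ) (w : ℂ) :
    Complex.exp p * (Complex.exp q * Complex.exp r * w)
      = Complex.exp (p + q + r) * w := by
  rw [Complex.exp_add, Complex.exp_add]; ring

/-- a real function on `RN N` whose coordinate partial derivatives vanish is constant -/
lemma const_of_pd_zero {N : ℕ} (f : RN N → ℝ) (hf : ContDiff ℝ 1 f)
    (h : ∀ x j, fderiv ℝ f x (EuclideanSpace.single j 1) = 0) :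
    ∀ x y : RN N, f x = f y := by
  apply is_const_of_fderiv_eq_zero (hf.differentiable one_ne_zero)
  intro x
  have : (fderiv ℝ f x).toLinearMap = (0 : RN N →L[ℝ] ℝ).toLinearMap := by
    apply Module.Basis.ext (EuclideanSpace.basisFun (Fin N) ℝ).toBasis
    intro i
    simpa [EuclideanSpace.basisFun_apply] using h x i
  exact ContinuousLinearMap.coe_injective this

/-- the group of magnetic shifts in the lattice-periodic case.
Assume that for every `y ∈ ℤ^N` there is a `C¹` function `φ_y` with
`A(·−y) = A + ∇φ_y`, normalized by `φ_y(y/2) = 0`. Then `φ₀ ≡ 0`; (i) for all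
`y₁, y₂` there is a constant `γ(y₁,y₂)` with
`φ_{y₁+y₂} = φ_{y₁}(·−y₂) + φ_{y₂} + γ(y₁,y₂)` and consequently
`g_{y₂} g_{y₁} = e^{−iγ(y₁,y₂)} g_{y₁+y₂}`; (ii) `γ(y,0) = γ(0,y) = γ(y,−y) = 0`;
(iii) `g_{y,θ}⁻¹ = g_{−y,−θ}`; hence `𝒢_A = {g_{y,θ}}` is a group under composition
(it is closed under composition, contains the identity `g_{0,0}`, and inverses). -/
theorem magnetic_shifts_group (N : ℕ) (A : RN N → RN N) (hA : Continuous A)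
    (φ : (Fin N → ℤ) → RN N → ℝ)
    (hφC1 : ∀ y, ContDiff ℝ 1 (φ y))
    (hgauge : ∀ (y : Fin N → ℤ) (x : RN N) (j : Fin N),
        A (x - intVec y) j = A x j + pdR (φ y) j x)
    (hnorm : ∀ y : Fin N → ℤ, φ y ((1 / 2 : ℝ) • intVec y) = 0) :
    (∀ x : RN N, φ 0 x = 0) ∧
    (∃ γ : (Fin N → ℤ) → (Fin N → ℤ) → ℝ,
      (∀ (y₁ y₂ : Fin N → ℤ) (x : RN N),
          φ (y₁ + y₂) x = φ y₁ (x - intVec y₂) + φ y₂ x + γ y₁ y₂) ∧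
      (∀ (y₁ y₂ : Fin N → ℤ) (u : RN N → ℂ) (x : RN N),
          gShiftθ φ y₂ 0 (gShiftθ φ y₁ 0 u) x
            = Complex.exp (-(Complex.I * (γ y₁ y₂ : ℂ))) * gShiftθ φ (y₁ + y₂) 0 u x) ∧
      (∀ y : Fin N → ℤ, γ y 0 = 0 ∧ γ 0 y = 0 ∧ γ y (-y) = 0)) ∧
    (∀ (y : Fin N → ℤ) (θ : ℝ) (u : RN N → ℂ),
        gShiftθ φ (-y) (-θ) (gShiftθ φ y θ u) = u ∧
        gShiftθ φ y θ (gShiftθ φ (-y) (-θ) u) = u) ∧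
    (∀ u : RN N → ℂ, gShiftθ φ 0 0 u = u) ∧
    (∀ (y₁ y₂ : Fin N → ℤ) (θ₁ θ₂ : ℝ), ∃ (y₃ : Fin N → ℤ) (θ₃ : ℝ),
        ∀ u : RN N → ℂ, gShiftθ φ y₂ θ₂ (gShiftθ φ y₁ θ₁ u) = gShiftθ φ y₃ θ₃ u) := by
  -- φ 0 ≡ 0
  have hφ0 : ∀ x : RN N, φ 0 x = 0 := by
    have hc : ∀ x y : RN N, φ 0 x = φ 0 y := by
      apply const_of_pd_zero _ (hφC1 0)
      intro x j
      have := hgauge 0 x j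
      rw [intVec_zero, sub_zero] at this
      have : pdR (φ 0) j x = 0 := by linarith
      simpa [pdR] using this
    intro x
    have h0 := hnorm 0
    rw [intVec_zero, smul_zero] at h0
    rw [hc x 0, h0]
  -- the cocycle identity
  have key : ∀ (y₁ y₂ : Fin N → ℤ) (x x' : RN N),
      φ (y₁ + y₂) x - φ y₁ (x - intVec y₂) - φ y₂ x
        = φ (y₁ + y₂) x' - φ y₁ (x' - intVec y₂) - φ y₂ x' := by
    intro y₁ y₂
    apply const_of_pd_zero
    · exact (hφC1 (y₁ + y₂)).sub (((hφC1 y₁).comp (contDiff_id.sub contDiff_const))) |>.sub (hφC1 y₂)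
    · intro x j
      have h1 : HasFDerivAt (fun x : RN N => φ y₁ (x - intVec y₂))
          (fderiv ℝ (φ y₁) (x - intVec y₂)) x := by
        have ha := ((hφC1 y₁).differentiable one_ne_zero (x - intVec y₂)).hasFDerivAt
        have hb : HasFDerivAt (fun x : RN N => x - intVec y₂)
            (ContinuousLinearMap.id ℝ (RN N)) x := (hasFDerivAt_id x).sub_const _
        have := ha.comp x hb
        rwa [ContinuousLinearMap.comp_id] at this
      have h12 := ((hφC1 (y₁ + y₂)).differentiable one_ne_zero x).hasFDerivAt
      have h2 := ((hφC1 y₂).differentiable one_ne_zero x).hasFDerivAt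
      have hψ := (h12.sub h1).sub h2
      rw [show (fun x => φ (y₁ + y₂) x - φ y₁ (x - intVec y₂) - φ y₂ x) = ((φ (y₁ + y₂) - fun x => φ y₁ (x - intVec y₂)) - φ y₂) from rfl, hψ.fderiv]
      simp only [ContinuousLinearMap.coe_sub', Pi.sub_apply]
      have e1 := hgauge (y₁ + y₂) x j
      have e2 := hgauge y₁ (x - intVec y₂) j
      have e3 := hgauge y₂ x j
      rw [intVec_add] at e1
      have hx : x - (intVec y₁ + intVec y₂) = x - intVec y₂ - intVec y₁ := by abel
      rw [hx] at e1
      rw [e2, e3] at e1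
      simp only [pdR] at e1 ⊢
      linarith
  set γ : (Fin N → ℤ) → (Fin N → ℤ) → ℝ := fun y₁ y₂ =>
    φ (y₁ + y₂) 0 - φ y₁ (0 - intVec y₂) - φ y₂ 0 with hγdef
  have hγ : ∀ (y₁ y₂ : Fin N → ℤ) (x : RN N),
      φ (y₁ + y₂) x = φ y₁ (x - intVec y₂) + φ y₂ x + γ y₁ y₂ := by
    intro y₁ y₂ x
    have := key y₁ y₂ x 0
    simp only [hγdef]
    linarith
  have hγy0 : ∀ y, γ y 0 = 0 := by
    intro y
    have := hγ y 0 0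
    rw [intVec_zero, sub_zero] at this
    simp only [add_zero] at this
    have h0 := hφ0 0
    linarith
  have hγ0y : ∀ y, γ 0 y = 0 := by
    intro y
    have := hγ 0 y 0
    simp only [zero_add] at this
    have h0 := hφ0 (0 - intVec y)
    linarith
  have hγyny : ∀ y, γ y (-y) = 0 := by
    intro y
    have h := hγ y (-y) ((1 / 2 : ℝ) • intVec (-y))
    rw [add_neg_cancel] at h
    have e1 : (1 / 2 : ℝ) • intVec (-y) - intVec (-y) = (1 / 2 : ℝ) • intVec y := by
      rw [intVec_neg]; module
    rw [e1, hnorm y, hnorm (-y), hφ0 _] at h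
    linarith
  have hopp : ∀ (y : Fin N → ℤ) (x : RN N), φ y (x - intVec (-y)) + φ (-y) x = 0 := by
    intro y x
    have := hγ y (-y) x
    rw [add_neg_cancel, hγyny y, hφ0 x] at this
    linarith
  refine ⟨hφ0, ⟨γ, hγ, ?_, fun y => ⟨hγy0 y, hγ0y y, hγyny y⟩⟩, ?_, ?_, ?_⟩
  · -- composition as multiple of g_{y₁+y₂}
    intro y₁ y₂ u x
    simp only [gShiftθ]
    have hx : x - intVec y₂ - intVec y₁ = x - intVec (y₁ + y₂) := by
      rw [intVec_add]; abel
    rw [hx, exp4, exp3]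
    congr 1
    rw [hγ y₁ y₂ x]
    push_cast
    ring
  · -- inverses
    intro y θ u
    constructor
    · funext x
      simp only [gShiftθ]
      have hx : x - intVec (-y) - intVec y = x := by rw [intVec_neg]; abel
      rw [hx, exp4]
      have h := hopp y x
      have harg : Complex.I * ((-θ : ℝ) : ℂ) + Complex.I * ((φ (-y) x : ℝ) : ℂ)
          + Complex.I * ((θ : ℝ) : ℂ) + Complex.I * ((φ y (x - intVec (-y)) : ℝ) : ℂ)
          = Complex.I * (((φ y (x - intVec (-y)) + φ (-y) x : ℝ)) : ℂ) := by
        push_cast; ring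
      rw [harg, h]
      simp
    · funext x
      simp only [gShiftθ]
      have hx : x - intVec y - intVec (-y) = x := by rw [intVec_neg]; abel
      rw [hx, exp4]
      have h := hopp y (x - intVec y)
      rw [hx] at h
      have harg : Complex.I * ((θ : ℝ) : ℂ) + Complex.I * ((φ y x : ℝ) : ℂ)
          + Complex.I * ((-θ : ℝ) : ℂ) + Complex.I * ((φ (-y) (x - intVec y) : ℝ) : ℂ)
          = Complex.I * (((φ y x + φ (-y) (x - intVec y) : ℝ)) : ℂ) := by
        push_cast; ring
      rw [harg, h]
      simp
  · -- identity
    intro u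
    funext x
    simp [gShiftθ, hφ0, intVec_zero]
  · -- closure
    intro y₁ y₂ θ₁ θ₂
    refine ⟨y₁ + y₂, θ₁ + θ₂ - γ y₁ y₂, fun u => ?_⟩
    funext x
    simp only [gShiftθ]
    have hx : x - intVec y₂ - intVec y₁ = x - intVec (y₁ + y₂) := by
      rw [intVec_add]; abel
    rw [hx, exp4]
    have : Complex.exp (Complex.I * (((θ₁ + θ₂ - γ y₁ y₂ : ℝ)) : ℂ))
        * Complex.exp (Complex.I * ((φ (y₁ + y₂) x : ℝ) : ℂ)) * u (x - intVec (y₁ + y₂))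
        = Complex.exp (Complex.I * (((θ₁ + θ₂ - γ y₁ y₂ : ℝ)) : ℂ)
          + Complex.I * ((φ (y₁ + y₂) x : ℝ) : ℂ)) * u (x - intVec (y₁ + y₂)) := by
      rw [Complex.exp_add]
    rw [this, hγ y₁ y₂ x]
    congr 2
    push_cast
    ring

end
end
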